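/- Let S and A be measurable spaces, δ a real discount factor with 0 < δ < 1, K a Markov kernel from S × A to S, and r : S × A → ℝ a bounded measurable reward. Let π : S → A be a measurable stationary policy, and let V_π : S → ℝ be the unique bounded measurable solution of V_π(s) = (1 − δ)·r(s, π(s)) + δ·∫ V_π(s′) ∂K(s, π(s)). Then V_π(s) equals the expected discounted reward of π: V_π(s) = ∫ (∑_{t=0}^∞ δ^t·(1 − δ)·r(ω(t), π(ω(t)))) ∂P^π_s, where P^π_s is the Ionescu–Tulcea trajectory measure of the Markov chain started at s with transitions s′ ∼ K(s_t, π(s_t)). -/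

import Mathlib

open MeasureTheory ProbabilityTheory

/-- Prepending an initial state to a trajectory. -/
def prepend {S : Type*} (s : S) (ω : ℕ → S) : ℕ → S
  | 0 => s
  | n + 1 => ω n

section Aux

variable {α β : Type*} [MeasurableSpace α] [MeasurableSpace β]

lemma integrable_of_abs_le (ν : Measure β) [IsFiniteMeasure ν] {f : β → ℝ}
    (hf : AEStronglyMeasurable f ν) {C : ℝ} (hC : ∀ b, |f b| ≤ C) : Integrable f ν :=
  (integrable_const C).mono' hf
    (Filter.Eventually.of_forall fun b => by simpa [Real.norm_eq_abs] using hC b)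

lemma integral_bind_of_bounded (μ : Measure α) [IsProbabilityMeasure μ]
    (m : α → Measure β) (hm : Measurable m) (hprob : ∀ a, IsProbabilityMeasure (m a))
    {f : β → ℝ} (hf : Measurable f) {C : ℝ} (hC0 : 0 ≤ C) (hC : ∀ b, |f b| ≤ C) :
    ∫ b, f b ∂(μ.bind m) = ∫ a, (∫ b, f b ∂(m a)) ∂μ := by
  have hbind : IsProbabilityMeasure (μ.bind m) := by
    constructor
    rw [Measure.bind_apply MeasurableSet.univ hm.aemeasurable]
    have : ∀ a, m a Set.univ = 1 := fun a => (hprob a).measure_univ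
    simp [this]
  -- shift to a nonnegative function
  set g : β → ℝ := fun b => f b + C with hg_def
  have hg_meas : Measurable g := hf.add_const C
  have hg_nonneg : ∀ b, 0 ≤ g b := fun b => by
    have := (abs_le.mp (hC b)).1; simp only [hg_def]; linarith
  have hg_bd : ∀ b, g b ≤ 2 * C := fun b => by
    have := (abs_le.mp (hC b)).2; simp only [hg_def]; linarith
  have hg_abs : ∀ b, |g b| ≤ 2 * C := fun b => by
    rw [abs_of_nonneg (hg_nonneg b)]; exact hg_bd b
  have hginner : ∀ (ν : Measure β) [IsProbabilityMeasure ν],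
      ∫ b, g b ∂ν = (∫⁻ b, ENNReal.ofReal (g b) ∂ν).toReal := fun ν _ =>
    integral_eq_lintegral_of_nonneg_ae (Filter.Eventually.of_forall hg_nonneg)
      hg_meas.aestronglyMeasurable
  have hlt : ∀ (ν : Measure β) [IsProbabilityMeasure ν],
      ∫⁻ b, ENNReal.ofReal (g b) ∂ν ≤ ENNReal.ofReal (2 * C) := by
    intro ν _
    calc ∫⁻ b, ENNReal.ofReal (g b) ∂ν ≤ ∫⁻ _, ENNReal.ofReal (2 * C) ∂ν :=
          lintegral_mono fun b => ENNReal.ofReal_le_ofReal (hg_bd b)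
      _ = ENNReal.ofReal (2 * C) := by simp
  have key : ∫ b, g b ∂(μ.bind m) = ∫ a, (∫ b, g b ∂(m a)) ∂μ := by
    rw [hginner (μ.bind m),
      Measure.lintegral_bind hm.aemeasurable (hg_meas.ennreal_ofReal.aemeasurable)]
    have hmeasin : Measurable fun a => ∫⁻ b, ENNReal.ofReal (g b) ∂(m a) :=
      (Measure.measurable_lintegral hg_meas.ennreal_ofReal).comp hm
    rw [← integral_toReal hmeasin.aemeasurable
      (Filter.Eventually.of_forall fun a =>
        lt_of_le_of_lt (haveI := hprob a; hlt (m a)) ENNReal.ofReal_lt_top)]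
    exact integral_congr_ae (Filter.Eventually.of_forall fun a => by
      haveI := hprob a; exact (hginner (m a)).symm)
  have hfg : ∀ (ν : Measure β) [IsProbabilityMeasure ν], ∫ b, f b ∂ν = ∫ b, g b ∂ν - C := by
    intro ν _
    have hfi : Integrable f ν := integrable_of_abs_le ν hf.aestronglyMeasurable hC
    rw [hg_def]
    rw [integral_add hfi (integrable_const C), integral_const]
    simp
  have hWmeas : Measurable fun a => ∫ b, g b ∂(m a) := by
    have h1 : (fun a => ∫ b, g b ∂(m a))
        = fun a => (∫⁻ b, ENNReal.ofReal (g b) ∂(m a)).toReal :=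
      funext fun a => haveI := hprob a; hginner (m a)
    rw [h1]
    exact ((Measure.measurable_lintegral hg_meas.ennreal_ofReal).comp hm).ennreal_toReal
  have hWbd : ∀ a, |∫ b, g b ∂(m a)| ≤ 2 * C := by
    intro a
    haveI := hprob a
    have hgi : Integrable g (m a) := integrable_of_abs_le _ hg_meas.aestronglyMeasurable hg_abs
    rw [abs_of_nonneg (integral_nonneg hg_nonneg)]
    calc ∫ b, g b ∂(m a) ≤ ∫ _, 2 * C ∂(m a) := integral_mono hgi (integrable_const _) hg_bd
      _ = 2 * C := by simp
  have hWint : Integrable (fun a => ∫ b, g b ∂(m a)) μ :=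
    integrable_of_abs_le μ hWmeas.aestronglyMeasurable hWbd
  rw [hfg (μ.bind m), key]
  have h2 : ∫ a, (∫ b, f b ∂(m a)) ∂μ = ∫ a, ((∫ b, g b ∂(m a)) - C) ∂μ :=
    integral_congr_ae (Filter.Eventually.of_forall fun a => haveI := hprob a; hfg (m a))
  rw [h2, integral_sub hWint (integrable_const C), integral_const]
  simp

end Aux

/-- The unique bounded measurable solution `Vπ` of the Bellman recursion
`Vπ s = (1 - δ) * r (s, π s) + δ * ∫ Vπ ∂(K (s, π s))` equals the expected discounted reward
of the stationary policy `π`, i.e. the integral of `ω ↦ ∑' t, δ ^ t * (1 - δ) * r (ω t, π (ω t))`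
under the Ionescu–Tulcea trajectory measure `Pπ s` of the Markov chain with kernel
`s ↦ K (s, π s)` started at `s` (characterized as a Markov kernel satisfying the one-step
disintegration `Pπ s = (K (s, π s)).bind (fun s₁ => (Pπ s₁).map (prepend s))`). -/
theorem stationary_policy_value_eq_expected_discounted_reward
    {S A : Type*} [MeasurableSpace S] [MeasurableSpace A]
    (δ : ℝ) (hδ0 : 0 < δ) (hδ1 : δ < 1)
    (K : Kernel (S × A) S) [IsMarkovKernel K]
    (r : S × A → ℝ) (hr_meas : Measurable r) (hr_bd : ∃ C, ∀ p, |r p| ≤ C)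
    (π : S → A) (hπ_meas : Measurable π)
    (Pπ : S → Measure (ℕ → S)) (hP_meas : Measurable Pπ)
    (hP_prob : ∀ s, IsProbabilityMeasure (Pπ s))
    (hP_rec : ∀ s, Pπ s = (K (s, π s)).bind fun s₁ => (Pπ s₁).map (prepend s))
    (Vπ : S → ℝ) (hV_meas : Measurable Vπ) (hV_bd : ∃ C, ∀ s, |Vπ s| ≤ C)
    (hV_bellman : ∀ s, Vπ s = (1 - δ) * r (s, π s) + δ * ∫ s', Vπ s' ∂(K (s, π s))) :
    ∀ s, Vπ s = ∫ ω, (∑' t : ℕ, δ ^ t * (1 - δ) * r (ω t, π (ω t))) ∂(Pπ s) := by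
  obtain ⟨Cr0, hCr0⟩ := hr_bd
  obtain ⟨Cv0, hCv0⟩ := hV_bd
  set Cr : ℝ := |Cr0| with hCr_def
  set Cv : ℝ := |Cv0| with hCv_def
  have hCrnn : 0 ≤ Cr := abs_nonneg _
  have hCvnn : 0 ≤ Cv := abs_nonneg _
  have hCr : ∀ p, |r p| ≤ Cr := fun p => (hCr0 p).trans (le_abs_self _)
  have hCv : ∀ s, |Vπ s| ≤ Cv := fun s => (hCv0 s).trans (le_abs_self _)
  have h1δ : 0 < 1 - δ := by linarith
  set g : (ℕ → S) → ℝ := fun ω => ∑' t : ℕ, δ ^ t * (1 - δ) * r (ω t, π (ω t)) with hg_def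
  have hterm_abs : ∀ (ω : ℕ → S) (t : ℕ),
      |δ ^ t * (1 - δ) * r (ω t, π (ω t))| ≤ δ ^ t * ((1 - δ) * Cr) := by
    intro ω t
    rw [abs_mul, abs_mul, abs_of_nonneg (pow_nonneg hδ0.le t), abs_of_nonneg h1δ.le, mul_assoc]
    exact mul_le_mul_of_nonneg_left (mul_le_mul_of_nonneg_left (hCr _) h1δ.le)
      (pow_nonneg hδ0.le t)
  have hsum_geom : Summable (fun t : ℕ => δ ^ t * ((1 - δ) * Cr)) :=
    (summable_geometric_of_lt_one hδ0.le hδ1).mul_right _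
  have hterm_norm : ∀ (ω : ℕ → S) (t : ℕ),
      ‖δ ^ t * (1 - δ) * r (ω t, π (ω t))‖ ≤ δ ^ t * ((1 - δ) * Cr) := fun ω t => by
    rw [Real.norm_eq_abs]; exact hterm_abs ω t
  have hsum_norm : ∀ ω : ℕ → S, Summable (fun t : ℕ => ‖δ ^ t * (1 - δ) * r (ω t, π (ω t))‖) :=
    fun ω => hsum_geom.of_nonneg_of_le (fun t => norm_nonneg _) (hterm_norm ω)
  have hsummable : ∀ ω : ℕ → S, Summable (fun t : ℕ => δ ^ t * (1 - δ) * r (ω t, π (ω t))) :=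
    fun ω => Summable.of_norm_bounded hsum_geom (hterm_norm ω)
  have hg_bd : ∀ ω, |g ω| ≤ Cr := by
    intro ω
    calc |g ω| ≤ ∑' t : ℕ, ‖δ ^ t * (1 - δ) * r (ω t, π (ω t))‖ :=
          norm_tsum_le_tsum_norm (hsum_norm ω)
      _ ≤ ∑' t : ℕ, δ ^ t * ((1 - δ) * Cr) :=
          Summable.tsum_le_tsum (hterm_norm ω) (hsum_norm ω) hsum_geom
      _ = (∑' t : ℕ, δ ^ t) * ((1 - δ) * Cr) := tsum_mul_right
      _ = Cr := by
          rw [tsum_geometric_of_lt_one hδ0.le hδ1]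
          field_simp
  have hg_meas : Measurable g := by
    refine measurable_of_tendsto_metrizable
      (f := fun n ω => ∑ t ∈ Finset.range n, δ ^ t * (1 - δ) * r (ω t, π (ω t))) ?_ ?_
    · intro n
      refine Finset.measurable_sum _ fun t _ => ?_
      exact ((hr_meas.comp ((measurable_pi_apply t).prodMk
        (hπ_meas.comp (measurable_pi_apply t)))).const_mul _)
    · rw [tendsto_pi_nhds]
      intro ω
      exact (hsummable ω).hasSum.tendsto_sum_nat
  have hprepend_meas : ∀ s : S, Measurable (prepend s) := by
    intro s
    refine measurable_pi_lambda _ fun n => ?_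
    cases n with
    | zero => exact measurable_const
    | succ n => exact measurable_pi_apply n
  have hg_int : ∀ (ν : Measure (ℕ → S)) [IsProbabilityMeasure ν], Integrable g ν :=
    fun ν _ => integrable_of_abs_le ν hg_meas.aestronglyMeasurable hg_bd
  have hshift : ∀ (s : S) (ω : ℕ → S), g (prepend s ω) = (1 - δ) * r (s, π s) + δ * g ω := by
    intro s ω
    have h0 : g (prepend s ω)
        = δ ^ 0 * (1 - δ) * r (prepend s ω 0, π (prepend s ω 0))
          + ∑' t : ℕ, δ ^ (t + 1) * (1 - δ) * r (prepend s ω (t + 1), π (prepend s ω (t + 1))) :=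
      Summable.tsum_eq_zero_add (hsummable (prepend s ω))
    have hz : prepend s ω 0 = s := rfl
    have hsucc : ∀ t : ℕ, prepend s ω (t + 1) = ω t := fun t => rfl
    rw [h0, hz]
    simp only [hsucc, pow_zero, one_mul]
    congr 1
    have : ∀ t : ℕ, δ ^ (t + 1) * (1 - δ) * r (ω t, π (ω t))
        = δ * (δ ^ t * (1 - δ) * r (ω t, π (ω t))) := by
      intro t; rw [pow_succ]; ring
    simp only [this]
    exact tsum_mul_left
  set W : S → ℝ := fun s => ∫ ω, g ω ∂(Pπ s) with hW_def
  have hW_bd : ∀ s, |W s| ≤ Cr := by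
    intro s
    haveI := hP_prob s
    calc |W s| = ‖∫ ω, g ω ∂(Pπ s)‖ := (Real.norm_eq_abs _).symm
      _ ≤ ∫ ω, ‖g ω‖ ∂(Pπ s) := norm_integral_le_integral_norm _
      _ = ∫ ω, |g ω| ∂(Pπ s) := by simp [Real.norm_eq_abs]
      _ ≤ ∫ _, Cr ∂(Pπ s) := integral_mono (hg_int (Pπ s)).abs (integrable_const _) hg_bd
      _ = Cr := by simp
  have hW_meas : Measurable W := by
    let κP : Kernel S (ℕ → S) := ⟨Pπ, hP_meas⟩
    haveI : IsMarkovKernel κP := ⟨hP_prob⟩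
    have := ((hg_meas.comp measurable_snd).stronglyMeasurable
      (f := fun p : S × (ℕ → S) => g p.2)).integral_kernel_prod_right' (κ := κP)
    exact this.measurable
  have hW_int : ∀ (ν : Measure S) [IsProbabilityMeasure ν], Integrable W ν :=
    fun ν _ => integrable_of_abs_le ν hW_meas.aestronglyMeasurable hW_bd
  have hW_bellman : ∀ s, W s = (1 - δ) * r (s, π s) + δ * ∫ s', W s' ∂(K (s, π s)) := by
    intro s
    haveI : IsProbabilityMeasure (K (s, π s)) := IsMarkovKernel.isProbabilityMeasure _
    have hm : Measurable fun s₁ => (Pπ s₁).map (prepend s) :=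
      (Measure.measurable_map _ (hprepend_meas s)).comp hP_meas
    have hprobm : ∀ s₁, IsProbabilityMeasure ((Pπ s₁).map (prepend s)) := fun s₁ =>
      haveI := hP_prob s₁
      Measure.isProbabilityMeasure_map (hprepend_meas s).aemeasurable
    have step1 : W s = ∫ s₁, (∫ ω, g ω ∂((Pπ s₁).map (prepend s))) ∂(K (s, π s)) := by
      rw [hW_def]
      simp only
      rw [hP_rec s]
      exact integral_bind_of_bounded _ _ hm hprobm hg_meas hCrnn hg_bd
    have step2 : ∀ s₁, ∫ ω, g ω ∂((Pπ s₁).map (prepend s))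
        = (1 - δ) * r (s, π s) + δ * W s₁ := by
      intro s₁
      haveI := hP_prob s₁
      rw [integral_map (hprepend_meas s).aemeasurable hg_meas.aestronglyMeasurable]
      simp only [hshift s]
      rw [integral_add (integrable_const _) ((hg_int (Pπ s₁)).const_mul δ),
        integral_const, integral_const_mul]
      simp [hW_def]
    rw [step1]
    rw [integral_congr_ae (Filter.Eventually.of_forall step2)]
    rw [integral_add (integrable_const _) ((hW_int (K (s, π s))).const_mul δ),
      integral_const, integral_const_mul]
    simp
  have hD_bd : ∀ (n : ℕ) (s : S), |Vπ s - W s| ≤ δ ^ n * (Cv + Cr) := by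
    intro n
    induction n with
    | zero =>
      intro s
      simp only [pow_zero, one_mul]
      calc |Vπ s - W s| ≤ |Vπ s| + |W s| := abs_sub _ _
        _ ≤ Cv + Cr := add_le_add (hCv s) (hW_bd s)
    | succ n ih =>
      intro s
      haveI : IsProbabilityMeasure (K (s, π s)) := IsMarkovKernel.isProbabilityMeasure _
      have hVi : Integrable Vπ (K (s, π s)) :=
        integrable_of_abs_le _ hV_meas.aestronglyMeasurable hCv
      have hWi : Integrable W (K (s, π s)) := hW_int _
      have hrec : Vπ s - W s = δ * ∫ s', (Vπ s' - W s') ∂(K (s, π s)) := by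
        rw [hV_bellman s, hW_bellman s, integral_sub hVi hWi]
        ring
      rw [hrec, abs_mul, abs_of_nonneg hδ0.le]
      have : |∫ s', (Vπ s' - W s') ∂(K (s, π s))| ≤ δ ^ n * (Cv + Cr) := by
        calc |∫ s', (Vπ s' - W s') ∂(K (s, π s))|
            = ‖∫ s', (Vπ s' - W s') ∂(K (s, π s))‖ := (Real.norm_eq_abs _).symm
          _ ≤ ∫ s', ‖Vπ s' - W s'‖ ∂(K (s, π s)) := norm_integral_le_integral_norm _
          _ = ∫ s', |Vπ s' - W s'| ∂(K (s, π s)) := by simp [Real.norm_eq_abs]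
          _ ≤ ∫ _, δ ^ n * (Cv + Cr) ∂(K (s, π s)) :=
              integral_mono (hVi.sub hWi).abs (integrable_const _) ih
          _ = δ ^ n * (Cv + Cr) := by simp
      calc δ * |∫ s', (Vπ s' - W s') ∂(K (s, π s))| ≤ δ * (δ ^ n * (Cv + Cr)) := by
            exact mul_le_mul_of_nonneg_left this hδ0.le
        _ = δ ^ (n + 1) * (Cv + Cr) := by rw [pow_succ]; ring
  intro s
  have ht : Filter.Tendsto (fun n : ℕ => δ ^ n * (Cv + Cr)) Filter.atTop (nhds 0) := by
    simpa using (tendsto_pow_atTop_nhds_zero_of_lt_one hδ0.le hδ1).mul_const (Cv + Cr)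
  have h0 : |Vπ s - W s| ≤ 0 := ge_of_tendsto' ht (fun n => hD_bd n s)
  have : Vπ s - W s = 0 := abs_eq_zero.mp (le_antisymm h0 (abs_nonneg _))
  have hVW : Vπ s = W s := by linarith
  exact hVW
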